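/- Let H = H₁ ⊕ H₂ be a finite-dimensional Hilbert space of dimension D = d₁ + d₂ with d₂/D ≤ ε. Let ρ be a density matrix on H whose compression to H₁ is δ-close in trace distance to Π₁/D (the H₁-block of the maximally mixed state): (1/2)‖Π₁ρΠ₁ - Π₁/D‖₁ ≤ δ. Then (1/2)‖ρ - I/D‖₁ ≤ 2δ + 2ε. -/

import Mathlib

open scoped ComplexOrder

/-- The trace norm (Schatten 1-norm, sum of singular values) of a complex matrix:
`‖A‖₁ = Tr √(AᴴA)`. -/
noncomputable def traceNorm {n : Type} [Fintype n] [DecidableEq n] (A : Matrix n n ℂ) : ℝ :=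
  (((Matrix.posSemidef_conjTranspose_mul_self A).1.eigenvectorUnitary : Matrix n n ℂ) *
      Matrix.diagonal ((fun x : ℝ => (x : ℂ)) ∘ (Real.sqrt ∘ (Matrix.posSemidef_conjTranspose_mul_self A).1.eigenvalues)) *
      (star (Matrix.posSemidef_conjTranspose_mul_self A).1.eigenvectorUnitary : Matrix n n ℂ)).trace.re

namespace StmtAux
set_option linter.unusedSectionVars false
open Matrix

variable {n : Type} [Fintype n] [DecidableEq n]
open scoped MatrixOrder

lemma traceNorm_eq_sqrt (A : Matrix n n ℂ) :
    traceNorm A = (CFC.sqrt (A.conjTranspose * A)).trace.re := by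
  have h := Matrix.posSemidef_conjTranspose_mul_self A
  rw [CFC.sqrt_eq_cfc, cfc_nnreal_eq_real _ _, h.1.cfc_eq, Matrix.IsHermitian.cfc,
    Unitary.conjStarAlgAut_apply, traceNorm]
  congr 5
  funext i
  simp
  rw [max_eq_left (h.eigenvalues_nonneg i)]

/-- diagonal entries of a PSD matrix have nonneg real part -/
lemma psd_diag_re_nonneg {P : Matrix n n ℂ} (hP : P.PosSemidef) (i : n) :
    0 ≤ (P i i).re := by
  have h := hP.re_dotProduct_nonneg (Pi.single i 1)
  have hd : star (Pi.single i 1 : n → ℂ) ⬝ᵥ (P *ᵥ Pi.single i 1) = P i i := by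
    simp [Matrix.mulVec_single, dotProduct, Pi.single_apply, apply_ite,
      Finset.sum_ite_eq']
  rwa [hd] at h

lemma trace_psd_re_nonneg {P : Matrix n n ℂ} (hP : P.PosSemidef) : 0 ≤ P.trace.re := by
  rw [Matrix.trace, Complex.re_sum]
  exact Finset.sum_nonneg fun i _ => psd_diag_re_nonneg hP i

lemma trace_herm_im_zero {P : Matrix n n ℂ} (hP : P.IsHermitian) : P.trace.im = 0 := by
  have h : Pᴴ.trace = star P.trace := Matrix.trace_conjTranspose P
  rw [hP.eq] at h
  have := congrArg Complex.im h
  simp only [Complex.star_def, Complex.conj_im] at this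
  linarith

lemma trace_mul_psd_re_nonneg {P Q : Matrix n n ℂ} (hP : P.PosSemidef) (hQ : Q.PosSemidef) :
    0 ≤ (P * Q).trace.re := by
  have h1 : P * Q = CFC.sqrt P * (CFC.sqrt P * Q) := by
    rw [← Matrix.mul_assoc, CFC.sqrt_mul_sqrt_self P hP.nonneg]
  have h2 : (P * Q).trace = (CFC.sqrt P * Q * CFC.sqrt P).trace := by
    rw [h1, Matrix.trace_mul_comm, Matrix.mul_assoc]
  rw [h2]
  refine trace_psd_re_nonneg ?_
  have := hQ.mul_mul_conjTranspose_same (CFC.sqrt P)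
  rwa [(Matrix.nonneg_iff_posSemidef.mp (CFC.sqrt_nonneg P)).isHermitian.eq] at this

/-- `2 Re tr (XᴴY) ≤ Re tr (XᴴX) + Re tr (YᴴY)` -/
lemma two_re_trace_le {m : Type} [Fintype m] [DecidableEq m] (X Y : Matrix n m ℂ) :
    2 * ((Xᴴ * Y).trace).re ≤ ((Xᴴ * X).trace).re + ((Yᴴ * Y).trace).re := by
  have h := trace_psd_re_nonneg (Matrix.posSemidef_conjTranspose_mul_self (X - Y))
  have hexp : (X - Y)ᴴ * (X - Y) = Xᴴ * X - Xᴴ * Y - Yᴴ * X + Yᴴ * Y := by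
    rw [Matrix.conjTranspose_sub, Matrix.sub_mul, Matrix.mul_sub, Matrix.mul_sub]
    abel
  have hconj : ((Yᴴ * X).trace).re = ((Xᴴ * Y).trace).re := by
    have : Yᴴ * X = (Xᴴ * Y)ᴴ := by simp [Matrix.conjTranspose_mul]
    rw [this, Matrix.trace_conjTranspose]
    simp
  rw [hexp] at h
  simp only [Matrix.trace_add, Matrix.trace_sub, Complex.add_re, Complex.sub_re] at h
  linarith


open Matrix
set_option linter.unusedSectionVars false

variable {n : Type} [Fintype n] [DecidableEq n]

variable {X : Matrix n n ℂ}

/-- apply a real function to a Hermitian matrix through its spectral decomposition -/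
noncomputable def hfun (hX : X.IsHermitian) (f : ℝ → ℝ) : Matrix n n ℂ :=
  (hX.eigenvectorUnitary : Matrix n n ℂ) *
    Matrix.diagonal (fun i => (f (hX.eigenvalues i) : ℂ)) *
    (star (hX.eigenvectorUnitary : Matrix n n ℂ))

lemma hfun_mul (hX : X.IsHermitian) (f g : ℝ → ℝ) :
    hfun hX f * hfun hX g = hfun hX (fun x => f x * g x) := by
  unfold hfun
  have hU : (star (hX.eigenvectorUnitary : Matrix n n ℂ)) *
      (hX.eigenvectorUnitary : Matrix n n ℂ) = 1 :=
    Matrix.mem_unitaryGroup_iff'.mp (hX.eigenvectorUnitary).2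
  have key : (hX.eigenvectorUnitary : Matrix n n ℂ) *
      Matrix.diagonal (fun i => (f (hX.eigenvalues i) : ℂ)) *
      ((star (hX.eigenvectorUnitary : Matrix n n ℂ)) *
        ((hX.eigenvectorUnitary : Matrix n n ℂ) *
      (Matrix.diagonal (fun i => (g (hX.eigenvalues i) : ℂ)) *
      (star (hX.eigenvectorUnitary : Matrix n n ℂ))))) =
      (hX.eigenvectorUnitary : Matrix n n ℂ) *
      Matrix.diagonal (fun i => ((f (hX.eigenvalues i) * g (hX.eigenvalues i) : ℝ) : ℂ)) *
      (star (hX.eigenvectorUnitary : Matrix n n ℂ)) := by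
    rw [← Matrix.mul_assoc (star _), hU, Matrix.one_mul]
    rw [← Matrix.mul_assoc, Matrix.mul_assoc _ _ (Matrix.diagonal _),
      Matrix.diagonal_mul_diagonal]
    push_cast
    rfl
  simpa only [Matrix.mul_assoc] using key

lemma hfun_id (hX : X.IsHermitian) : hfun hX (fun x => x) = X := by
  unfold hfun
  exact hX.spectral_theorem.symm

lemma hfun_one (hX : X.IsHermitian) : hfun hX (fun _ => 1) = 1 := by
  unfold hfun
  have hU : (hX.eigenvectorUnitary : Matrix n n ℂ) *
      (star (hX.eigenvectorUnitary : Matrix n n ℂ)) = 1 :=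
    Matrix.mem_unitaryGroup_iff.mp (hX.eigenvectorUnitary).2
  simp only [Complex.ofReal_one, Matrix.diagonal_one, Matrix.mul_one]
  exact hU

lemma hfun_sub (hX : X.IsHermitian) (f g : ℝ → ℝ) :
    hfun hX f - hfun hX g = hfun hX (fun x => f x - g x) := by
  unfold hfun
  rw [← Matrix.sub_mul, ← Matrix.mul_sub, Matrix.diagonal_sub]
  norm_cast

lemma hfun_isHermitian (hX : X.IsHermitian) (f : ℝ → ℝ) : (hfun hX f).IsHermitian := by
  unfold hfun
  unfold Matrix.IsHermitian
  rw [Matrix.conjTranspose_mul, Matrix.conjTranspose_mul, Matrix.diagonal_conjTranspose]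
  have h1 : (star (hX.eigenvectorUnitary : Matrix n n ℂ))ᴴ =
      (hX.eigenvectorUnitary : Matrix n n ℂ) := by
    rw [Matrix.star_eq_conjTranspose, Matrix.conjTranspose_conjTranspose]
  rw [h1, Matrix.star_eq_conjTranspose, Matrix.mul_assoc]
  congr 2
  ext i j
  by_cases h : i = j <;> simp [Matrix.diagonal, h, Complex.star_def]

lemma hfun_posSemidef (hX : X.IsHermitian) (f : ℝ → ℝ) (hf : ∀ x, 0 ≤ f x) :
    (hfun hX f).PosSemidef := by
  unfold hfun
  rw [Matrix.star_eq_conjTranspose]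
  refine Matrix.PosSemidef.mul_mul_conjTranspose_same ?_ _
  refine Matrix.posSemidef_diagonal_iff.mpr fun i => ?_
  rw [RCLike.nonneg_iff]
  constructor
  · simpa using hf _
  · simp

lemma hfun_trace (hX : X.IsHermitian) (f : ℝ → ℝ) :
    (hfun hX f).trace = ∑ i, (f (hX.eigenvalues i) : ℂ) := by
  unfold hfun
  rw [Matrix.trace_mul_cycle]
  have hU : (star (hX.eigenvectorUnitary : Matrix n n ℂ)) *
      (hX.eigenvectorUnitary : Matrix n n ℂ) = 1 :=
    Matrix.mem_unitaryGroup_iff'.mp (hX.eigenvectorUnitary).2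
  rw [hU, Matrix.one_mul, Matrix.trace_diagonal]

lemma traceNorm_herm {X : Matrix n n ℂ} (hX : X.IsHermitian) :
    traceNorm X = ∑ i, |hX.eigenvalues i| := by
  have hS : (hfun hX (fun x => |x|)).PosSemidef := hfun_posSemidef hX _ fun x => abs_nonneg x
  have hsq : (hfun hX (fun x => |x|)) ^ 2 = Xᴴ * X := by
    rw [pow_two, hfun_mul]
    have h1 : (fun x : ℝ => |x| * |x|) = fun x : ℝ => x * x := by
      funext x; exact abs_mul_abs_self x
    rw [h1, ← hfun_mul hX (fun x => x) (fun x => x), hfun_id, hX.eq]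
  have heq := (CFC.sqrt_unique ((pow_two _).symm.trans hsq) hS.nonneg).symm
  rw [traceNorm_eq_sqrt, ← heq, hfun_trace]
  rw [Complex.re_sum]
  simp

/-- trace of a block matrix -/
lemma trace_fromBlocks {m : Type} [Fintype m] [DecidableEq m]
    (A : Matrix n n ℂ) (B : Matrix n m ℂ) (C : Matrix m n ℂ) (D : Matrix m m ℂ) :
    (Matrix.fromBlocks A B C D).trace = A.trace + D.trace := by
  simp [Matrix.trace, Fintype.sum_sum_type, Matrix.fromBlocks]

lemma posSemidef_fromBlocks_corner {m : Type} [Fintype m] [DecidableEq m]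
    {P : Matrix n n ℂ} (hP : P.PosSemidef) :
    (Matrix.fromBlocks P 0 0 (0 : Matrix m m ℂ)).PosSemidef := by
  obtain ⟨L, hL⟩ : ∃ L : Matrix n n ℂ, P = Lᴴ * L :=
    ⟨CFC.sqrt P, by rw [(Matrix.nonneg_iff_posSemidef.mp (CFC.sqrt_nonneg P)).isHermitian.eq,
      CFC.sqrt_mul_sqrt_self P hP.nonneg]⟩
  have : Matrix.fromBlocks P 0 0 (0 : Matrix m m ℂ) =
      (Matrix.fromBlocks L 0 0 0)ᴴ * (Matrix.fromBlocks L 0 0 0) := by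
    rw [Matrix.fromBlocks_conjTranspose, Matrix.fromBlocks_multiply]
    simp [hL]
  rw [this]
  exact Matrix.posSemidef_conjTranspose_mul_self _

lemma traceNorm_fromBlocks_corner {m : Type} [Fintype m] [DecidableEq m]
    (X : Matrix n n ℂ) :
    traceNorm (Matrix.fromBlocks X 0 0 (0 : Matrix m m ℂ)) = traceNorm X := by
  set N := Xᴴ * X with hN
  have hNpsd := Matrix.posSemidef_conjTranspose_mul_self X
  have hkey : (Matrix.fromBlocks X 0 0 (0 : Matrix m m ℂ))ᴴ *
      (Matrix.fromBlocks X 0 0 (0 : Matrix m m ℂ)) = Matrix.fromBlocks N 0 0 0 := by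
    rw [Matrix.fromBlocks_conjTranspose, Matrix.fromBlocks_multiply]
    simp [hN]
  have hbig : (Matrix.fromBlocks N 0 0 (0 : Matrix m m ℂ)).PosSemidef :=
    posSemidef_fromBlocks_corner hNpsd
  have hsqpsd : (Matrix.fromBlocks (CFC.sqrt N) 0 0 (0 : Matrix m m ℂ)).PosSemidef :=
    posSemidef_fromBlocks_corner (Matrix.nonneg_iff_posSemidef.mp (CFC.sqrt_nonneg N))
  have hsq : (Matrix.fromBlocks (CFC.sqrt N) 0 0 (0 : Matrix m m ℂ)) ^ 2 =
      (Matrix.fromBlocks X 0 0 (0 : Matrix m m ℂ))ᴴ *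
      (Matrix.fromBlocks X 0 0 (0 : Matrix m m ℂ)) := by
    rw [hkey, pow_two, Matrix.fromBlocks_multiply]
    simp [CFC.sqrt_mul_sqrt_self N hNpsd.nonneg]
  have heq := (CFC.sqrt_unique ((pow_two _).symm.trans hsq) hsqpsd.nonneg).symm
  rw [traceNorm_eq_sqrt, ← heq, trace_fromBlocks, traceNorm_eq_sqrt]
  simp
  rfl


lemma trace_mul_le_parts {n : Type} [Fintype n] [DecidableEq n]
    {Δ N : Matrix n n ℂ} (hΔ : Δ.IsHermitian) (hN : N.PosSemidef)
    (hN1 : (1 - N).PosSemidef) :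
    ((Δ * N).trace).re ≤ ∑ i, max (hΔ.eigenvalues i) 0 ∧
    -((Δ * N).trace).re ≤ ∑ i, max (-hΔ.eigenvalues i) 0 := by
  set Δp := hfun hΔ (fun x => max x 0) with hΔp
  set Δm := hfun hΔ (fun x => max (-x) 0) with hΔm
  have hppsd : Δp.PosSemidef := hfun_posSemidef hΔ _ fun x => le_max_right _ _
  have hmpsd : Δm.PosSemidef := hfun_posSemidef hΔ _ fun x => le_max_right _ _
  have hsub : Δp - Δm = Δ := by
    rw [hΔp, hΔm, hfun_sub]
    have : (fun x : ℝ => max x 0 - max (-x) 0) = fun x : ℝ => x := by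
      funext x
      rcases le_total x 0 with h | h
      · simp [max_eq_right h, max_eq_left (neg_nonneg.mpr h)]
      · simp [max_eq_left h, max_eq_right (neg_nonpos.mpr h)]
    rw [this, hfun_id]
  have hsplit : ((Δ * N).trace).re = ((Δp * N).trace).re - ((Δm * N).trace).re := by
    rw [← hsub, Matrix.sub_mul, Matrix.trace_sub, Complex.sub_re]
  have hp0 : 0 ≤ ((Δp * N).trace).re := trace_mul_psd_re_nonneg hppsd hN
  have hm0 : 0 ≤ ((Δm * N).trace).re := trace_mul_psd_re_nonneg hmpsd hN
  have hple : ((Δp * N).trace).re ≤ ((Δp).trace).re := by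
    have h := trace_mul_psd_re_nonneg hppsd hN1
    have hexp : Δp * (1 - N) = Δp - Δp * N := by
      rw [Matrix.mul_sub, Matrix.mul_one]
    rw [hexp, Matrix.trace_sub, Complex.sub_re] at h
    linarith
  have hmle : ((Δm * N).trace).re ≤ ((Δm).trace).re := by
    have h := trace_mul_psd_re_nonneg hmpsd hN1
    have hexp : Δm * (1 - N) = Δm - Δm * N := by
      rw [Matrix.mul_sub, Matrix.mul_one]
    rw [hexp, Matrix.trace_sub, Complex.sub_re] at h
    linarith
  have hptr : ((Δp).trace).re = ∑ i, max (hΔ.eigenvalues i) 0 := by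
    rw [hΔp, hfun_trace, Complex.re_sum]; simp
  have hmtr : ((Δm).trace).re = ∑ i, max (-hΔ.eigenvalues i) 0 := by
    rw [hΔm, hfun_trace, Complex.re_sum]; simp
  constructor
  · rw [hsplit]; rw [hptr] at hple; linarith
  · rw [hsplit]; rw [hmtr] at hmle; linarith

lemma traceNorm_eq_parts {n : Type} [Fintype n] [DecidableEq n]
    {Δ : Matrix n n ℂ} (hΔ : Δ.IsHermitian) :
    traceNorm Δ = (∑ i, max (hΔ.eigenvalues i) 0) + ∑ i, max (-hΔ.eigenvalues i) 0 := by
  rw [traceNorm_herm hΔ, ← Finset.sum_add_distrib]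
  congr 1; funext i
  rcases le_total (hΔ.eigenvalues i) 0 with h | h
  · rw [abs_of_nonpos h, max_eq_right h, max_eq_left (neg_nonneg.mpr h), zero_add]
  · rw [abs_of_nonneg h, max_eq_left h, max_eq_right (neg_nonpos.mpr h), add_zero]

lemma R_trace_key {n : Type} [Fintype n] [DecidableEq n]
    {H : Matrix n n ℂ} (hH : H.IsHermitian) (htr : H.trace = 0) :
    ((hfun hH (fun x => if x < 0 then 1 else 0) * H).trace).re
      = -((1/2) * traceNorm H) := by
  have hRH : hfun hH (fun x => if x < 0 then 1 else 0) * H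
      = hfun hH (fun x => (if x < 0 then 1 else 0) * x) := by
    have h1 : hfun hH (fun x => if x < 0 then 1 else 0) * H
        = hfun hH (fun x => if x < 0 then 1 else 0) * hfun hH (fun x => x) :=
      congrArg (fun M => hfun hH (fun x => if x < 0 then 1 else 0) * M) (hfun_id hH).symm
    rw [h1, hfun_mul]
  have hsum0 : (∑ i, hH.eigenvalues i) = 0 := by
    have h := hfun_trace hH (fun x => x)
    rw [hfun_id hH, htr] at h
    have := congrArg Complex.re h.symm
    rw [Complex.re_sum] at this
    simpa using this
  rw [hRH, hfun_trace, Complex.re_sum, traceNorm_herm hH]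
  have hterm : ∀ x : ℝ, ((if x < 0 then (1:ℝ) else 0) * x) = (x - |x|) / 2 := by
    intro x
    rcases lt_or_ge x 0 with h | h
    · rw [if_pos h, one_mul, abs_of_neg h]; ring
    · rw [if_neg (not_lt.mpr h), zero_mul, abs_of_nonneg h]; ring
  have : ∀ i, (((if hH.eigenvalues i < 0 then (1:ℝ) else 0) * hH.eigenvalues i : ℝ) : ℂ).re
      = (hH.eigenvalues i - |hH.eigenvalues i|) / 2 := by
    intro i; rw [Complex.ofReal_re, hterm]
  rw [Finset.sum_congr rfl fun i _ => this i]
  calc ∑ i, (hH.eigenvalues i - |hH.eigenvalues i|) / 2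
      = (∑ i, (hH.eigenvalues i - |hH.eigenvalues i|)) / 2 := by rw [← Finset.sum_div]
    _ = ((∑ i, hH.eigenvalues i) - ∑ i, |hH.eigenvalues i|) / 2 := by
        rw [Finset.sum_sub_distrib]
    _ = -(1/2 * ∑ i, |hH.eigenvalues i|) := by rw [hsum0]; ring

end StmtAux
set_option maxHeartbeats 1000000 in
open Matrix StmtAux MatrixOrder in
theorem stmt14 (d₁ d₂ : ℕ) (ε δ : ℝ)
    (hε : (d₂ : ℝ) / ((d₁ : ℝ) + (d₂ : ℝ)) ≤ ε)
    (ρ : Matrix (Fin d₁ ⊕ Fin d₂) (Fin d₁ ⊕ Fin d₂) ℂ)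
    (hρ : ρ.PosSemidef) (htr : ρ.trace = 1)
    (P1 : Matrix (Fin d₁ ⊕ Fin d₂) (Fin d₁ ⊕ Fin d₂) ℂ)
    (hP1 : P1 = Matrix.fromBlocks 1 0 0 0)
    (hclose : (1 / 2 : ℝ) * traceNorm (P1 * ρ * P1 - (((d₁ : ℂ) + (d₂ : ℂ))⁻¹) • P1) ≤ δ) :
    (1 / 2 : ℝ) * traceNorm (ρ - (((d₁ : ℂ) + (d₂ : ℂ))⁻¹) • (1 : Matrix _ _ ℂ))
      ≤ 2 * δ + 2 * ε := by
  classical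
  -- dimension is positive
  by_cases hD0 : d₁ + d₂ = 0
  · exfalso
    have h1 : d₁ = 0 := by omega
    have h2 : d₂ = 0 := by omega
    subst h1; subst h2
    rw [Matrix.trace] at htr
    have : IsEmpty (Fin 0 ⊕ Fin 0) := by infer_instance
    simp [Finset.univ_eq_empty] at htr
  have hDpos : 0 < d₁ + d₂ := Nat.pos_of_ne_zero hD0
  set Dr : ℝ := (d₁ : ℝ) + (d₂ : ℝ) with hDr
  have hDrpos : 0 < Dr := by
    have : ((d₁ + d₂ : ℕ) : ℝ) = Dr := by push_cast; ring
    rw [← this]; exact_mod_cast hDpos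
  set c : ℂ := ((d₁ : ℂ) + (d₂ : ℂ))⁻¹ with hcdef
  have hc : c = ((Dr⁻¹ : ℝ) : ℂ) := by
    rw [hcdef, hDr]; push_cast; ring
  have hcre : c.re = Dr⁻¹ := by rw [hc]; simp
  have hDrinv_nonneg : 0 ≤ Dr⁻¹ := by positivity
  have hεDr : Dr⁻¹ * (d₂ : ℝ) ≤ ε := by
    calc Dr⁻¹ * (d₂ : ℝ) = (d₂ : ℝ) / Dr := by ring
    _ ≤ ε := hε
  -- blocks of ρ
  have hρh := hρ.isHermitian
  set A := ρ.toBlocks₁₁ with hA_def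
  set B := ρ.toBlocks₁₂ with hB_def
  set CC := ρ.toBlocks₂₂ with hC_def
  have hB21 : ρ.toBlocks₂₁ = Bᴴ := by
    ext i j
    have h := congrFun (congrFun hρh.eq (Sum.inr i)) (Sum.inl j)
    rw [Matrix.conjTranspose_apply] at h
    simpa [Matrix.toBlocks₂₁, Matrix.toBlocks₁₂, hB_def] using h.symm
  have hρb : ρ = Matrix.fromBlocks A B Bᴴ CC := by
    rw [hA_def, hB_def, hC_def, ← hB21, Matrix.fromBlocks_toBlocks]
  have hApsd : A.PosSemidef := hρ.submatrix Sum.inl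
  have hCpsd : CC.PosSemidef := hρ.submatrix Sum.inr
  have hAh : A.IsHermitian := hApsd.isHermitian
  have hcstar : star c = c := by rw [hc]; exact Complex.conj_ofReal _
  -- Δ and its trace-norm bound
  set Δ : Matrix (Fin d₁) (Fin d₁) ℂ := A - c • 1 with hΔdef
  have hΔh : Δ.IsHermitian := by
    refine hAh.sub ?_
    unfold Matrix.IsHermitian
    rw [Matrix.conjTranspose_smul, Matrix.conjTranspose_one, hcstar]
  have hPP : P1 * ρ * P1 - c • P1 = Matrix.fromBlocks Δ 0 0 0 := by
    rw [hP1, hρb, hΔdef]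
    rw [Matrix.fromBlocks_multiply, Matrix.fromBlocks_multiply, Matrix.fromBlocks_smul]
    simp only [Matrix.one_mul, Matrix.mul_one, Matrix.zero_mul, Matrix.mul_zero,
      add_zero, zero_add, smul_zero]
    rw [sub_eq_add_neg, Matrix.fromBlocks_neg, Matrix.fromBlocks_add]
    simp [sub_eq_add_neg]
  have hΔtn : traceNorm Δ ≤ 2 * δ := by
    rw [hPP, traceNorm_fromBlocks_corner] at hclose
    linarith
  set p : ℝ := ∑ i, max (hΔh.eigenvalues i) 0 with hpdef
  set m : ℝ := ∑ i, max (-hΔh.eigenvalues i) 0 with hmdef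
  have hpm : p + m ≤ 2 * δ := by
    have h := traceNorm_eq_parts hΔh
    rw [← hpdef, ← hmdef] at h
    linarith
  have hp0 : 0 ≤ p := Finset.sum_nonneg fun i _ => le_max_right _ _
  have hm0 : 0 ≤ m := Finset.sum_nonneg fun i _ => le_max_right _ _
  -- H = ρ - c•1 and the projector R onto its negative eigenspace
  set H := ρ - c • (1 : Matrix (Fin d₁ ⊕ Fin d₂) (Fin d₁ ⊕ Fin d₂) ℂ) with hHdef
  have hHh : H.IsHermitian := by
    refine hρh.sub ?_
    unfold Matrix.IsHermitian
    rw [Matrix.conjTranspose_smul, Matrix.conjTranspose_one, hcstar]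
  have hcard : (Fintype.card (Fin d₁ ⊕ Fin d₂) : ℂ) = (d₁ : ℂ) + (d₂ : ℂ) := by
    simp [Fintype.card_sum]
  have hHtr : H.trace = 0 := by
    rw [hHdef, Matrix.trace_sub, htr, Matrix.trace_smul, Matrix.trace_one, hcard]
    rw [hcdef, smul_eq_mul]
    have hne : (d₁ : ℂ) + (d₂ : ℂ) ≠ 0 := by
      have : ((d₁ + d₂ : ℕ) : ℂ) ≠ 0 := Nat.cast_ne_zero.mpr hD0
      push_cast at this
      exact this
    rw [inv_mul_cancel₀ hne, sub_self]
  set R := hfun hHh (fun x => if x < 0 then 1 else 0) with hRdef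
  have hRpsd : R.PosSemidef :=
    hfun_posSemidef hHh _ fun x => by split <;> norm_num
  have hRh : R.IsHermitian := hRpsd.isHermitian
  have hR1mpsd : ((1 : Matrix _ _ ℂ) - R).PosSemidef := by
    have h1 : (1 : Matrix _ _ ℂ) - R
        = hfun hHh (fun x => 1 - (if x < 0 then 1 else 0)) := by
      rw [hRdef, ← hfun_sub, hfun_one]
    rw [h1]
    exact hfun_posSemidef hHh _ fun x => by split <;> norm_num
  have hRR : R * R = R := by
    have hff : (fun x : ℝ => (if x < 0 then (1:ℝ) else 0) * (if x < 0 then 1 else 0))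
        = fun x : ℝ => if x < 0 then (1:ℝ) else 0 := by
      funext x; split <;> norm_num
    rw [hRdef, hfun_mul, hff]
  have hkeyR := R_trace_key hHh hHtr
  rw [← hRdef] at hkeyR
  -- blocks of R
  set R₁ := R.toBlocks₁₁ with hR1_def
  set S := R.toBlocks₁₂ with hS_def
  set R₂ := R.toBlocks₂₂ with hR2_def
  have hRB21 : R.toBlocks₂₁ = Sᴴ := by
    ext i j
    have h := congrFun (congrFun hRh.eq (Sum.inr i)) (Sum.inl j)
    rw [Matrix.conjTranspose_apply] at h
    simpa [Matrix.toBlocks₂₁, Matrix.toBlocks₁₂, hS_def] using h.symm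
  have hRb : R = Matrix.fromBlocks R₁ S Sᴴ R₂ := by
    rw [hR1_def, hS_def, hR2_def, ← hRB21, Matrix.fromBlocks_toBlocks]
  have hR1psd : R₁.PosSemidef := hRpsd.submatrix Sum.inl
  have hR2psd : R₂.PosSemidef := hRpsd.submatrix Sum.inr
  have hR1h : R₁.IsHermitian := hR1psd.isHermitian
  have hR2h : R₂.IsHermitian := hR2psd.isHermitian
  have h1mR1 : ((1 : Matrix (Fin d₁) (Fin d₁) ℂ) - R₁).PosSemidef := by
    have h := hR1mpsd.submatrix Sum.inl
    have heq : ((1 : Matrix _ _ ℂ) - R).submatrix Sum.inl Sum.inl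
        = (1 : Matrix (Fin d₁) (Fin d₁) ℂ) - R₁ := by
      ext i j
      simp [Matrix.submatrix_apply, Matrix.sub_apply, Matrix.one_apply, hR1_def,
        Matrix.toBlocks₁₁]
    rwa [heq] at h
  have h1mR2 : ((1 : Matrix (Fin d₂) (Fin d₂) ℂ) - R₂).PosSemidef := by
    have h := hR1mpsd.submatrix Sum.inr
    have heq : ((1 : Matrix _ _ ℂ) - R).submatrix Sum.inr Sum.inr
        = (1 : Matrix (Fin d₂) (Fin d₂) ℂ) - R₂ := by
      ext i j
      simp [Matrix.submatrix_apply, Matrix.sub_apply, Matrix.one_apply, hR2_def,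
        Matrix.toBlocks₂₂]
    rwa [heq] at h
  have hSS : Sᴴ * S + R₂ * R₂ = R₂ := by
    have h := hRR
    rw [hRb, Matrix.fromBlocks_multiply] at h
    have h22 := congrArg Matrix.toBlocks₂₂ h
    rwa [Matrix.toBlocks_fromBlocks₂₂, Matrix.toBlocks_fromBlocks₂₂] at h22
  -- trace identities
  have htrR : R.trace = R₁.trace + R₂.trace := by
    conv_lhs => rw [hRb]
    exact trace_fromBlocks _ _ _ _
  have htrRρ : (R * ρ).trace
      = (R₁ * A).trace + (S * Bᴴ).trace + ((Sᴴ * B).trace + (R₂ * CC).trace) := by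
    conv_lhs => rw [hRb, hρb]
    rw [Matrix.fromBlocks_multiply, trace_fromBlocks, Matrix.trace_add, Matrix.trace_add]
  have hcross_re : ((S * Bᴴ).trace).re = ((Sᴴ * B).trace).re := by
    have h1 : S * Bᴴ = (B * Sᴴ)ᴴ := by
      rw [Matrix.conjTranspose_mul, Matrix.conjTranspose_conjTranspose]
    rw [h1, Matrix.trace_conjTranspose, Matrix.trace_mul_comm]
    simp [Complex.star_def]
  -- the target quantity
  have hThalf : (1/2 : ℝ) * traceNorm H
      = Dr⁻¹ * (R₁.trace).re + Dr⁻¹ * (R₂.trace).re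
        - (((R₁ * A).trace).re + 2 * ((Sᴴ * B).trace).re + ((R₂ * CC).trace).re) := by
    have hRH : R * H = R * ρ - c • R := by
      rw [hHdef, Matrix.mul_sub, Matrix.mul_smul, Matrix.mul_one]
    have h1 : ((R * H).trace).re
        = ((R * ρ).trace).re - Dr⁻¹ * (R.trace).re := by
      rw [hRH, Matrix.trace_sub, Matrix.trace_smul, Complex.sub_re, smul_eq_mul, hc,
        Complex.re_ofReal_mul]
    have h2 : ((R * ρ).trace).re
        = ((R₁ * A).trace).re + 2 * ((Sᴴ * B).trace).re + ((R₂ * CC).trace).re := by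
      rw [htrRρ]
      simp only [Complex.add_re]
      rw [hcross_re]
      ring
    have h3 : (R.trace).re = (R₁.trace).re + (R₂.trace).re := by
      rw [htrR, Complex.add_re]
    rw [h1, h2, h3] at hkeyR
    linarith
  -- simple bounds
  have tb1 : Dr⁻¹ * (R₁.trace).re - ((R₁ * A).trace).re ≤ m := by
    have hAeq : A = Δ + c • 1 := by rw [hΔdef]; abel
    have hsplit : R₁ * A = R₁ * Δ + c • R₁ := by
      conv_lhs => rw [hAeq]
      rw [Matrix.mul_add, Matrix.mul_smul, Matrix.mul_one]
    have hre : ((R₁ * A).trace).re = ((R₁ * Δ).trace).re + Dr⁻¹ * (R₁.trace).re := by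
      rw [hsplit, Matrix.trace_add, Complex.add_re, Matrix.trace_smul, smul_eq_mul, hc,
        Complex.re_ofReal_mul]
    have hcomm : ((R₁ * Δ).trace) = ((Δ * R₁).trace) := Matrix.trace_mul_comm _ _
    have hb := (trace_mul_le_parts hΔh hR1psd h1mR1).2
    rw [hre, hcomm]
    rw [← hmdef] at hb
    linarith
  have tb2 : (R₂.trace).re ≤ (d₂ : ℝ) := by
    have h := trace_psd_re_nonneg h1mR2
    rw [Matrix.trace_sub, Matrix.trace_one, Complex.sub_re] at h
    simp only [Fintype.card_fin, Complex.natCast_re] at h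
    linarith
  have tb2' : 0 ≤ (R₂.trace).re := trace_psd_re_nonneg hR2psd
  have tb3 : 0 ≤ ((R₂ * CC).trace).re := trace_mul_psd_re_nonneg hR2psd hCpsd
  have hR2sq_psd : (R₂ * R₂).PosSemidef := by
    have h := Matrix.posSemidef_conjTranspose_mul_self R₂
    rwa [hR2h.eq] at h
  -- the key η-inequality
  have key : ∀ η : ℝ, 0 < η →
      (1/2 : ℝ) * traceNorm H ≤ 2 * δ + 2 * ε + 2 * η * (d₂ : ℝ) := by
    intro η hη
    have hη1A : ((η : ℂ) • (1 : Matrix (Fin d₁) (Fin d₁) ℂ)).PosDef := by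
      rw [Matrix.smul_one_eq_diagonal]
      exact Matrix.posDef_diagonal_iff.mpr fun i => Complex.zero_lt_real.mpr hη
    have hη1C : ((η : ℂ) • (1 : Matrix (Fin d₂) (Fin d₂) ℂ)).PosDef := by
      rw [Matrix.smul_one_eq_diagonal]
      exact Matrix.posDef_diagonal_iff.mpr fun i => Complex.zero_lt_real.mpr hη
    have hη1big : ((η : ℂ) • (1 : Matrix (Fin d₁ ⊕ Fin d₂) (Fin d₁ ⊕ Fin d₂) ℂ)).PosSemidef := by
      rw [Matrix.smul_one_eq_diagonal]
      exact Matrix.posSemidef_diagonal_iff.mpr fun i => (Complex.zero_lt_real.mpr hη).le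
    set Aη := A + (η : ℂ) • 1 with hAη_def
    set Cη := CC + (η : ℂ) • 1 with hCη_def
    have hAη : Aη.PosDef := Matrix.PosDef.posSemidef_add hApsd hη1A
    have hCη : Cη.PosDef := Matrix.PosDef.posSemidef_add hCpsd hη1C
    set As := CFC.sqrt Aη with hAs_def
    set Cs := CFC.sqrt Cη with hCs_def
    have hAsh : As.IsHermitian := (Matrix.nonneg_iff_posSemidef.mp (CFC.sqrt_nonneg Aη)).isHermitian
    have hCsh : Cs.IsHermitian := (Matrix.nonneg_iff_posSemidef.mp (CFC.sqrt_nonneg Cη)).isHermitian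
    have hAsAs : As * As = Aη := CFC.sqrt_mul_sqrt_self Aη hAη.posSemidef.nonneg
    have hCsCs : Cs * Cs = Cη := CFC.sqrt_mul_sqrt_self Cη hCη.posSemidef.nonneg
    have hAs_unit : IsUnit As.det := by
      have hdet : As.det * As.det = Aη.det := by rw [← Matrix.det_mul, hAsAs]
      have h0 : Aη.det ≠ 0 := hAη.det_pos.ne'
      exact isUnit_iff_ne_zero.mpr fun h => h0 (by rw [← hdet, h, mul_zero])
    have hCs_unit : IsUnit Cs.det := by
      have hdet : Cs.det * Cs.det = Cη.det := by rw [← Matrix.det_mul, hCsCs]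
      have h0 : Cη.det ≠ 0 := hCη.det_pos.ne'
      exact isUnit_iff_ne_zero.mpr fun h => h0 (by rw [← hdet, h, mul_zero])
    have hAsinv : As * As⁻¹ = 1 := Matrix.mul_nonsing_inv _ hAs_unit
    have hAsinv' : As⁻¹ * As = 1 := Matrix.nonsing_inv_mul _ hAs_unit
    have hCsinv : Cs * Cs⁻¹ = 1 := Matrix.mul_nonsing_inv _ hCs_unit
    have hCsinv' : Cs⁻¹ * Cs = 1 := Matrix.nonsing_inv_mul _ hCs_unit
    have hAsinvh : As⁻¹ᴴ = As⁻¹ := by rw [Matrix.conjTranspose_nonsing_inv, hAsh.eq]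
    have hCsinvh : Cs⁻¹ᴴ = Cs⁻¹ := by rw [Matrix.conjTranspose_nonsing_inv, hCsh.eq]
    have hAηinv : As⁻¹ * As⁻¹ = Aη⁻¹ := by rw [← Matrix.mul_inv_rev, hAsAs]
    have hCηinv : Cs⁻¹ * Cs⁻¹ = Cη⁻¹ := by rw [← Matrix.mul_inv_rev, hCsCs]
    set K := As⁻¹ * B * Cs⁻¹ with hK_def
    have hBK : As * K * Cs = B := by
      rw [hK_def]
      calc As * (As⁻¹ * B * Cs⁻¹) * Cs = As * As⁻¹ * B * (Cs⁻¹ * Cs) := by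
            simp only [Matrix.mul_assoc]
        _ = B := by rw [hAsinv, hCsinv', Matrix.one_mul, Matrix.mul_one]
    have hKH : Kᴴ = Cs⁻¹ * (Bᴴ * As⁻¹) := by
      rw [hK_def, Matrix.conjTranspose_mul, Matrix.conjTranspose_mul, hAsinvh, hCsinvh]
    have hρη : (Matrix.fromBlocks Aη B Bᴴ Cη).PosSemidef := by
      have heq : ρ + (η : ℂ) • (1 : Matrix (Fin d₁ ⊕ Fin d₂) (Fin d₁ ⊕ Fin d₂) ℂ)
          = Matrix.fromBlocks Aη B Bᴴ Cη := by
        rw [hρb, ← Matrix.fromBlocks_one, Matrix.fromBlocks_smul, Matrix.fromBlocks_add]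
        simp only [smul_zero, add_zero]
        rfl
      exact heq ▸ (hρ.add hη1big)
    haveI := hAη.isUnit.invertible
    haveI := hCη.isUnit.invertible
    have hSchur1 : (Cη - Bᴴ * Aη⁻¹ * B).PosSemidef :=
      (Matrix.PosDef.fromBlocks₁₁ B Cη hAη).mp hρη
    have hSchur2 : (Aη - B * Cη⁻¹ * Bᴴ).PosSemidef :=
      (Matrix.PosDef.fromBlocks₂₂ Aη B hCη).mp hρη
    have hK2 : ((1 : Matrix (Fin d₂) (Fin d₂) ℂ) - Kᴴ * K).PosSemidef := by
      have he : (1 : Matrix (Fin d₂) (Fin d₂) ℂ) - Kᴴ * K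
          = Cs⁻¹ᴴ * (Cη - Bᴴ * Aη⁻¹ * B) * Cs⁻¹ := by
        rw [hCsinvh, Matrix.mul_sub, Matrix.sub_mul]
        congr 1
        · have h1 : Cs⁻¹ * Cη * Cs⁻¹ = 1 := by
            rw [← hCsCs]
            calc Cs⁻¹ * (Cs * Cs) * Cs⁻¹ = (Cs⁻¹ * Cs) * (Cs * Cs⁻¹) := by
                  simp only [Matrix.mul_assoc]
              _ = 1 := by rw [hCsinv', hCsinv, Matrix.one_mul]
          exact h1.symm
        · rw [hKH, hK_def, ← hAηinv]
          simp only [Matrix.mul_assoc]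
      rw [he]
      exact hSchur1.conjTranspose_mul_mul_same _
    have hK1 : ((1 : Matrix (Fin d₁) (Fin d₁) ℂ) - K * Kᴴ).PosSemidef := by
      have he : (1 : Matrix (Fin d₁) (Fin d₁) ℂ) - K * Kᴴ
          = As⁻¹ᴴ * (Aη - B * Cη⁻¹ * Bᴴ) * As⁻¹ := by
        rw [hAsinvh, Matrix.mul_sub, Matrix.sub_mul]
        congr 1
        · have h1 : As⁻¹ * Aη * As⁻¹ = 1 := by
            rw [← hAsAs]
            calc As⁻¹ * (As * As) * As⁻¹ = (As⁻¹ * As) * (As * As⁻¹) := by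
                  simp only [Matrix.mul_assoc]
              _ = 1 := by rw [hAsinv', hAsinv, Matrix.one_mul]
          exact h1.symm
        · rw [hKH, hK_def, ← hCηinv]
          simp only [Matrix.mul_assoc]
      rw [he]
      exact hSchur2.conjTranspose_mul_mul_same _
    have hNpsd : (K * Kᴴ).PosSemidef := Matrix.posSemidef_self_mul_conjTranspose K
    have hNtr0 : 0 ≤ ((K * Kᴴ).trace).re := trace_psd_re_nonneg hNpsd
    have hNtr_le : ((K * Kᴴ).trace).re ≤ (d₂ : ℝ) := by
      have hcomm : (K * Kᴴ).trace = (Kᴴ * K).trace := Matrix.trace_mul_comm _ _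
      have h := trace_psd_re_nonneg hK2
      rw [Matrix.trace_sub, Matrix.trace_one, Complex.sub_re] at h
      simp only [Fintype.card_fin, Complex.natCast_re] at h
      rw [hcomm]
      linarith
    -- cross term
    set X := S * Cs with hX_def
    set Y := -(As * K) with hY_def
    have h2re := two_re_trace_le X Y
    have hXYtr : ((Xᴴ * Y).trace).re = -(((Sᴴ * B).trace).re) := by
      have e1 : Xᴴ * Y = -((Cs * Sᴴ) * (As * K)) := by
        rw [hX_def, hY_def, Matrix.conjTranspose_mul, hCsh.eq, Matrix.mul_neg]
      rw [e1, Matrix.trace_neg, Complex.neg_re, neg_inj]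
      have e2 : ((Cs * Sᴴ) * (As * K)).trace = ((Sᴴ * B).trace) := by
        rw [Matrix.trace_mul_comm, ← Matrix.mul_assoc, hBK, Matrix.trace_mul_comm]
      rw [e2]
    have hXX : ((Xᴴ * X).trace).re ≤ ((R₂ * CC).trace).re + η * (d₂ : ℝ) := by
      have e0 : Xᴴ * X = Cs * (Sᴴ * S * Cs) := by
        rw [hX_def, Matrix.conjTranspose_mul, hCsh.eq]
        simp only [Matrix.mul_assoc]
      have e1 : (Xᴴ * X).trace = ((Sᴴ * S) * Cη).trace := by
        rw [e0, Matrix.trace_mul_comm, Matrix.mul_assoc, hCsCs]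
      have e2' : ((Sᴴ * S) * Cη).trace
          = ((Sᴴ * S) * CC).trace + (η : ℂ) * (Sᴴ * S).trace := by
        rw [hCη_def, Matrix.mul_add, Matrix.trace_add, Matrix.mul_smul, Matrix.mul_one,
          Matrix.trace_smul, smul_eq_mul]
      have hSSrw : Sᴴ * S = R₂ - R₂ * R₂ := eq_sub_of_add_eq hSS
      have h3 : ((Sᴴ * S) * CC).trace.re ≤ ((R₂ * CC).trace).re := by
        have hd : R₂ - Sᴴ * S = R₂ * R₂ := by rw [hSSrw]; abel
        have hsub : ((R₂ * CC).trace).re - ((Sᴴ * S) * CC).trace.re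
            = ((R₂ * R₂) * CC).trace.re := by
          rw [← Complex.sub_re, ← Matrix.trace_sub, ← Matrix.sub_mul, hd]
        have hpsd : 0 ≤ ((R₂ * R₂) * CC).trace.re :=
          trace_mul_psd_re_nonneg hR2sq_psd hCpsd
        linarith
      have h4 : ((η : ℂ) * (Sᴴ * S).trace).re ≤ η * (d₂ : ℝ) := by
        rw [Complex.re_ofReal_mul]
        have h5 : (Sᴴ * S).trace.re ≤ (d₂ : ℝ) := by
          have e : (Sᴴ * S).trace.re = R₂.trace.re - (R₂ * R₂).trace.re := by
            rw [hSSrw, Matrix.trace_sub, Complex.sub_re]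
          have h7 : 0 ≤ (R₂ * R₂).trace.re := trace_psd_re_nonneg hR2sq_psd
          linarith
        exact mul_le_mul_of_nonneg_left h5 hη.le
      rw [e1, e2', Complex.add_re]
      linarith
    have hYY : ((Yᴴ * Y).trace).re ≤ Dr⁻¹ * (d₂ : ℝ) + p + η * (d₂ : ℝ) := by
      have e1 : Yᴴ * Y = Kᴴ * (Aη * K) := by
        rw [hY_def, Matrix.conjTranspose_neg, Matrix.neg_mul, Matrix.mul_neg, neg_neg,
          Matrix.conjTranspose_mul, hAsh.eq, ← hAsAs]
        simp only [Matrix.mul_assoc]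
      have e2' : (Yᴴ * Y).trace = (Aη * (K * Kᴴ)).trace := by
        rw [e1, Matrix.trace_mul_comm, Matrix.mul_assoc]
      have e3 : Aη = Δ + c • 1 + (η : ℂ) • 1 := by rw [hAη_def, hΔdef]; abel
      have e4 : (Aη * (K * Kᴴ)).trace
          = (Δ * (K * Kᴴ)).trace + c * (K * Kᴴ).trace + (η : ℂ) * (K * Kᴴ).trace := by
        rw [e3, Matrix.add_mul, Matrix.add_mul, Matrix.trace_add, Matrix.trace_add,
          Matrix.smul_mul, Matrix.trace_smul, Matrix.smul_mul, Matrix.trace_smul,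
          Matrix.one_mul, smul_eq_mul, smul_eq_mul]
      have hΔN : (Δ * (K * Kᴴ)).trace.re ≤ p := by
        have hb := (trace_mul_le_parts hΔh hNpsd hK1).1
        rw [← hpdef] at hb
        exact hb
      have hcN : (c * (K * Kᴴ).trace).re ≤ Dr⁻¹ * (d₂ : ℝ) := by
        rw [hc, Complex.re_ofReal_mul]
        exact mul_le_mul_of_nonneg_left hNtr_le hDrinv_nonneg
      have hηN : ((η : ℂ) * (K * Kᴴ).trace).re ≤ η * (d₂ : ℝ) := by
        rw [Complex.re_ofReal_mul]
        exact mul_le_mul_of_nonneg_left hNtr_le hη.le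
      rw [e2', e4, Complex.add_re, Complex.add_re]
      linarith
    -- assemble
    have hDrR2 : Dr⁻¹ * (R₂.trace).re ≤ ε :=
      le_trans (mul_le_mul_of_nonneg_left tb2 hDrinv_nonneg) hεDr
    rw [hXYtr] at h2re
    rw [hThalf]
    linarith
  -- conclude, letting η → 0
  rcases Nat.eq_zero_or_pos d₂ with h0 | hpos2
  · have h := key 1 one_pos
    have hd0 : ((d₂ : ℕ) : ℝ) = 0 := by rw [h0]; norm_num
    rw [hd0] at h
    linarith
  · refine le_of_forall_pos_le_add fun ζ hζ => ?_
    have hd2 : (0 : ℝ) < (d₂ : ℝ) := by exact_mod_cast hpos2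
    have h := key (ζ / (2 * (d₂ : ℝ))) (by positivity)
    have he : 2 * (ζ / (2 * (d₂ : ℝ))) * (d₂ : ℝ) = ζ := by field_simp
    rw [he] at h
    exact h
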